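/- For integers s, t ≥ 3, l ≥ 1, and m ≥ 0, one has O_m((s) ⧢ ((t) ⧢ ({2}^l))†) − O_m((s−1) ⊛ ((t+1) ⧢ ({2}^l))†) = Σ_{a+b+c=l, a,b,c≥0} ( O_m({2}^a, s, {2}^b, {1}^{t−2}, {2}^{c+1}) + O_m({2}^a, {1}^{t−2}, {2}^{b+1}, s, {2}^c) − O_m({2}^a, {1}^{t−1}, {2}^b, s+1, {2}^c) ) − Σ_{a+b=l, a,b≥0} O_m({2}^a, s, {1}^{t−2}, {2}^{b+1}) − Σ_{a+b+c=l−1, a,b,c≥0} O_m({2}^a, s+1, {2}^b, {1}^{t−1}, {2}^{c+1}). -/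

import Mathlib

open scoped BigOperators

/-- The multiple zeta value of an index `k = (k₁, …, k_r)`:
`ζ(k₁,…,k_r) = Σ_{1 ≤ m₁ < ⋯ < m_r} 1/(m₁^{k₁} ⋯ m_r^{k_r})`,
written as a `tsum` over strictly increasing tuples of positive integers. -/
noncomputable def mzv (k : List ℕ) : ℝ :=
  ∑' f : {f : Fin k.length → ℕ+ // StrictMono f},
    ∏ i : Fin k.length, (1 : ℝ) / (((f.1 i : ℕ) : ℝ) ^ (k.get i))

/-- Formal ℚ-linear combinations of indices. -/
abbrev IndexSum := List ℕ →₀ ℚ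

/-- An index viewed as a formal sum. -/
noncomputable def ofIdx (k : List ℕ) : IndexSum := Finsupp.single k 1

/-- ζ extended ℚ-linearly to formal sums of indices. -/
noncomputable def mzvL (x : IndexSum) : ℝ := x.sum fun k c => (c : ℝ) * mzv k

/-- The Ohno sum `O_m(k) = Σ_{|e| = m} ζ(k ⊕ e)`. -/
noncomputable def ohno (m : ℕ) (k : List ℕ) : ℝ :=
  ∑ e ∈ Finset.Nat.antidiagonalTuple k.length m,
    mzv (List.ofFn fun i : Fin k.length => k.get i + e i)

/-- The Ohno sum extended ℚ-linearly to formal sums of indices. -/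
noncomputable def ohnoL (m : ℕ) (x : IndexSum) : ℝ := x.sum fun k c => (c : ℝ) * ohno m k

/-- The multiset of shuffles of two lists. -/
def shuffles : List ℕ → List ℕ → Multiset (List ℕ)
  | [], l => {l}
  | a :: k, [] => {a :: k}
  | a :: k, b :: l =>
      ((shuffles k (b :: l)).map (a :: ·)) + ((shuffles (a :: k) l).map (b :: ·))
  termination_by k l => k.length + l.length

/-- The shuffle product of two indices, as a formal sum of indices. -/
noncomputable def shufL (k l : List ℕ) : IndexSum := ((shuffles k l).map ofIdx).sum

/-- The shuffle product, extended ℚ-bilinearly to formal sums of indices. -/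
noncomputable def shuf (x y : IndexSum) : IndexSum :=
  x.sum fun k c => y.sum fun l d => (c * d) • shufL k l

/-- Encoding of an index as a binary word: an entry `a` becomes the block
`false, true, …, true` with `a - 1` trues. -/
def encodeIdx (k : List ℕ) : List Bool := k.flatMap fun a => false :: List.replicate (a - 1) true

/-- Auxiliary decoder. -/
def decodeAux : List Bool → ℕ → List ℕ
  | [], n => [n]
  | false :: w, n => n :: decodeAux w 1
  | true :: w, n => decodeAux w (n + 1)

/-- Decoding of a binary word into an index. -/
def decodeIdx : List Bool → List ℕ
  | [] => []
  | _ :: w => decodeAux w 1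

/-- The dual index `k†`: reverse the binary word of `k` and swap the letters. -/
def dualIdx (k : List ℕ) : List ℕ := decodeIdx (((encodeIdx k).reverse).map (fun b => !b))

/-- Duality extended termwise to formal sums of indices. -/
noncomputable def dualL (x : IndexSum) : IndexSum := Finsupp.mapDomain dualIdx x

/-- `(a) ⊛ (l₁,…,l_r) = Σ_{i=1}^{r} (l₁,…,l_{i-1}, l_i + a, l_{i+1},…,l_r)`. -/
noncomputable def hastIdx (a : ℕ) (l : List ℕ) : IndexSum :=
  ∑ i : Fin l.length, Finsupp.single (l.set i (l.get i + a)) 1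

/-- `⊛` extended ℚ-linearly in the second argument. -/
noncomputable def hast (a : ℕ) (x : IndexSum) : IndexSum := x.sum fun l c => c • hastIdx a l

/-- `Σ_{|e| = m} ζ((a) ⊛ (x ⊕ e))`, where for each index occurring in `x` the
sequence `e` of nonnegative integers runs over the suitable depth (the depth of
that index) with entry sum `m`, and `⊕ e` is applied termwise. -/
noncomputable def zetaHastSum (a m : ℕ) (x : IndexSum) : ℝ :=
  x.sum fun k c => (c : ℝ) *
    ∑ e ∈ Finset.Nat.antidiagonalTuple k.length m,
      mzvL (hastIdx a (List.ofFn fun i : Fin k.length => k.get i + e i))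

/-- Appending an entry `a` to each index occurring in a formal sum. -/
noncomputable def appendL (x : IndexSum) (a : ℕ) : IndexSum :=
  Finsupp.mapDomain (fun k => k ++ [a]) x

/-- `F_{m,l}(s; k) = O_m((s) ⧢ k ⧢ ({2}^l)) − O_m((s) ⧢ (k ⧢ ({2}^l))†)`. -/
noncomputable def F (m l s : ℕ) (k : List ℕ) : ℝ :=
  ohnoL m (shuf (ofIdx [s]) (shufL k (List.replicate l 2)))
    - ohnoL m (shuf (ofIdx [s]) (dualL (shufL k (List.replicate l 2))))

/-- `D_{m,l}(s,t) = F_{m,l}(s;(t+1)) − F_{m,l}(t;(s+1))`. -/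
noncomputable def D (m l s t : ℕ) : ℝ := F m l s [t + 1] - F m l t [s + 1]

section Scratch
open List

lemma shuffles_singleton (x : ℕ) : ∀ (w : List ℕ),
    shuffles [x] w = (Multiset.range (w.length + 1)).map (fun j => w.insertIdx j x)
  | [] => by simp [shuffles]
  | b :: w => by
      rw [shuffles, shuffles_singleton x w]
      simp only [shuffles]
      have h1 : (fun j => List.insertIdx (b :: w) j x) ∘ (fun j => 1 + j)
          = (fun y => b :: y) ∘ (fun j => List.insertIdx w j x) := by
        funext j
        show List.insertIdx (b :: w) (1 + j) x = b :: List.insertIdx w j x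
        rw [show 1 + j = j + 1 by omega, List.insertIdx_succ_cons]
      conv_rhs => rw [show (b :: w).length + 1 = 1 + (w.length + 1) from by
          rw [List.length_cons]; omega,
        Multiset.range_add, Multiset.map_add, Multiset.map_map, h1, ← Multiset.map_map]
      rw [Multiset.map_map]
      congr 1

lemma insertIdx_rep_le (x s : ℕ) : ∀ (n j : ℕ), j ≤ n → ∀ (v : List ℕ),
    (replicate n x ++ v).insertIdx j s = replicate j x ++ s :: (replicate (n - j) x ++ v)
  | n, 0, _, v => by simp [List.insertIdx]
  | n + 1, j + 1, h, v => by
      rw [replicate_succ, cons_append, List.insertIdx_succ_cons,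
        insertIdx_rep_le x s n j (by omega) v]
      simp [replicate_succ]

lemma insertIdx_rep_add (x s : ℕ) : ∀ (n j : ℕ) (v : List ℕ),
    (replicate n x ++ v).insertIdx (n + j) s = replicate n x ++ v.insertIdx j s
  | 0, j, v => by simp
  | n + 1, j, v => by
      rw [replicate_succ, cons_append, show n + 1 + j = (n + j) + 1 by omega,
        List.insertIdx_succ_cons, insertIdx_rep_add x s n j v]
      simp

lemma getD_rep_lt (x : ℕ) {n j : ℕ} (h : j < n) (v : List ℕ) :
    (replicate n x ++ v).getD j 0 = x := by
  rw [List.getD_eq_getElem _ _ (by simp; omega), List.getElem_append_left (by simpa)]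
  simp

lemma getD_rep_add (x : ℕ) (n j : ℕ) (v : List ℕ) :
    (replicate n x ++ v).getD (n + j) 0 = v.getD j 0 := by
  rcases lt_or_ge j v.length with h | h
  · rw [List.getD_eq_getElem _ _ (by simp; omega), List.getD_eq_getElem _ _ h,
      List.getElem_append_right (by simp) ]
    congr 1; simp
  · rw [List.getD_eq_default _ _ (by simp; omega), List.getD_eq_default _ _ h]

lemma set_rep_lt (x y : ℕ) : ∀ (n j : ℕ), j < n → ∀ (v : List ℕ),
    (replicate n x ++ v).set j y = replicate j x ++ y :: (replicate (n - j - 1) x ++ v)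
  | n + 1, 0, _, v => by simp [replicate_succ]
  | n + 1, j + 1, h, v => by
      rw [replicate_succ, cons_append, List.set_cons_succ,
        set_rep_lt x y n j (by omega) v]
      simp [replicate_succ]

lemma set_rep_add (x y : ℕ) : ∀ (n j : ℕ) (v : List ℕ),
    (replicate n x ++ v).set (n + j) y = replicate n x ++ v.set j y
  | 0, j, v => by simp
  | n + 1, j, v => by
      rw [replicate_succ, cons_append, show n + 1 + j = (n + j) + 1 by omega,
        List.set_cons_succ, set_rep_add x y n j v]
      simp

end Scratch
section LastBlock
open List

lemma insertIdx_rep_last (x s n j : ℕ) (h : j ≤ n) :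
    (replicate n x).insertIdx j s = replicate j x ++ s :: replicate (n - j) x := by
  have := insertIdx_rep_le x s n j h []
  simpa using this

lemma getD_rep_last (x : ℕ) {n j : ℕ} (h : j < n) : (replicate n x).getD j 0 = x := by
  have := getD_rep_lt x h ([] : List ℕ)
  simpa using this

lemma set_rep_last (x y n j : ℕ) (h : j < n) :
    (replicate n x).set j y = replicate j x ++ y :: replicate (n - j - 1) x := by
  have := set_rep_lt x y n j h []
  simpa using this

end LastBlock
section Dual
open List

def mword (b : ℕ) : List Bool := (List.replicate b [true, false]).flatten

lemma mword_succ (b : ℕ) : mword (b + 1) = true :: false :: mword b := by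
  simp [mword, List.replicate_succ]

lemma encodeIdx_cons (a : ℕ) (k : List ℕ) :
    encodeIdx (a :: k) = false :: List.replicate (a - 1) true ++ encodeIdx k := by
  simp [encodeIdx]

lemma encode_rep2_succ (a : ℕ) :
    encodeIdx (List.replicate (a + 1) 2) = false :: true :: encodeIdx (List.replicate a 2) := by
  rw [List.replicate_succ, encodeIdx_cons]; rfl

lemma Wapp (a : ℕ) : encodeIdx (List.replicate a 2) ++ [false, true]
    = false :: true :: encodeIdx (List.replicate a 2) := by
  induction a with
  | zero => rfl
  | succ a ih => rw [encode_rep2_succ, cons_append, cons_append, ih]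

lemma Wnegrev (a : ℕ) : ((encodeIdx (List.replicate a 2)).reverse.map (fun b => !b))
    = encodeIdx (List.replicate a 2) := by
  induction a with
  | zero => rfl
  | succ a ih =>
      rw [encode_rep2_succ, reverse_cons, reverse_cons, append_assoc,
        map_append, ih]
      simpa using Wapp a

lemma WM (b : ℕ) : encodeIdx (List.replicate b 2) ++ [false] = false :: mword b := by
  induction b with
  | zero => rfl
  | succ b ih => rw [encode_rep2_succ, mword_succ, cons_append, cons_append, ih]

lemma decodeAux_false (w : List Bool) (n : ℕ) :
    decodeAux (false :: w) n = n :: decodeAux w 1 := rfl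

lemma decodeAux_true (w : List Bool) (n : ℕ) :
    decodeAux (true :: w) n = decodeAux w (n + 1) := rfl

lemma decode_mword (b : ℕ) : ∀ (w : List Bool),
    decodeAux (mword b ++ w) 1 = List.replicate b 2 ++ decodeAux w 1 := by
  induction b with
  | zero => intro w; rfl
  | succ b ih =>
      intro w
      rw [mword_succ, cons_append, cons_append, decodeAux_true, decodeAux_false, ih,
        List.replicate_succ, cons_append]

lemma decode_repfalse (j : ℕ) : ∀ (w : List Bool),
    decodeAux (List.replicate j false ++ w) 1 = List.replicate j 1 ++ decodeAux w 1 := by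
  induction j with
  | zero => intro w; rfl
  | succ j ih =>
      intro w
      rw [List.replicate_succ, cons_append, decodeAux_false, ih, List.replicate_succ, cons_append]

lemma decode_W_end (a : ℕ) : ∀ n, decodeAux (encodeIdx (List.replicate a 2)) n
    = n :: List.replicate a 2 := by
  induction a with
  | zero => intro n; rfl
  | succ a ih =>
      intro n
      rw [encode_rep2_succ, decodeAux_false, decodeAux_true, ih, List.replicate_succ]

lemma dual_block (a t b : ℕ) (ht : 2 ≤ t) :
    dualIdx (List.replicate a 2 ++ t :: List.replicate b 2)
      = List.replicate b 2 ++ List.replicate (t - 2) 1 ++ List.replicate (a + 1) 2 := by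
  have henc : encodeIdx (List.replicate a 2 ++ t :: List.replicate b 2)
      = encodeIdx (List.replicate a 2) ++ ((false :: List.replicate (t - 1) true)
        ++ encodeIdx (List.replicate b 2)) := by
    rw [encodeIdx, List.flatMap_append]
    congr 1
  have ht1 : List.replicate (t - 1) false = false :: List.replicate (t - 2) false := by
    rw [← List.replicate_succ]
    congr 1
    omega
  have hrev : ((encodeIdx (List.replicate a 2) ++ ((false :: List.replicate (t - 1) true)
        ++ encodeIdx (List.replicate b 2))).reverse.map (fun b => !b))
      = encodeIdx (List.replicate b 2)
        ++ (false :: (List.replicate (t - 2) false ++ (true :: encodeIdx (List.replicate a 2)))) := by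
    rw [reverse_append, reverse_append, map_append, map_append, Wnegrev, reverse_cons,
      reverse_replicate, map_append, Wnegrev]
    simp [map_replicate, ht1]
  rw [dualIdx, henc, hrev,
    show encodeIdx (List.replicate b 2)
        ++ (false :: (List.replicate (t - 2) false ++ (true :: encodeIdx (List.replicate a 2))))
      = false :: (mword b ++ (List.replicate (t - 2) false
          ++ (true :: encodeIdx (List.replicate a 2)))) from by
      rw [show encodeIdx (List.replicate b 2)
          ++ (false :: (List.replicate (t - 2) false ++ (true :: encodeIdx (List.replicate a 2))))
        = (encodeIdx (List.replicate b 2) ++ [false]) ++ (List.replicate (t - 2) false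
          ++ (true :: encodeIdx (List.replicate a 2))) from by simp, WM]
      simp]
  show decodeAux _ 1 = _
  rw [decode_mword, decode_repfalse, decodeAux_true, decode_W_end, ← List.replicate_succ]
  simp

end Dual
section Linear

lemma ohnoL_single (m : ℕ) (k : List ℕ) (c : ℚ) :
    ohnoL m (Finsupp.single k c) = (c : ℝ) * ohno m k := by
  rw [ohnoL, Finsupp.sum_single_index]
  simp

lemma ohnoL_add (m : ℕ) (x y : IndexSum) : ohnoL m (x + y) = ohnoL m x + ohnoL m y := by
  rw [ohnoL, ohnoL, ohnoL]
  exact Finsupp.sum_add_index' (fun k => by simp) (fun k c d => by push_cast; ring)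

noncomputable def ohnoLhom (m : ℕ) : IndexSum →+ ℝ := AddMonoidHom.mk' (ohnoL m) (ohnoL_add m)

lemma shuf_add (x y z : IndexSum) : shuf x (y + z) = shuf x y + shuf x z := by
  rw [shuf, shuf, shuf, ← Finsupp.sum_add]
  congr 1
  funext k c
  exact Finsupp.sum_add_index' (fun w => by simp) (fun w d e => by rw [mul_add, add_smul])

noncomputable def shufHom (x : IndexSum) : IndexSum →+ IndexSum :=
  AddMonoidHom.mk' (shuf x) (shuf_add x)

lemma shuf_ofIdx_single (s : ℕ) (w : List ℕ) (c : ℚ) :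
    shuf (ofIdx [s]) (Finsupp.single w c) = c • shufL [s] w := by
  rw [ofIdx, shuf, Finsupp.sum_single_index (by simp), Finsupp.sum_single_index (by simp),
    one_mul]

lemma hast_add (a : ℕ) (y z : IndexSum) : hast a (y + z) = hast a y + hast a z := by
  rw [hast, hast, hast]
  exact Finsupp.sum_add_index' (fun w => by simp) (fun w d e => by rw [add_smul])

noncomputable def hastHom (a : ℕ) : IndexSum →+ IndexSum :=
  AddMonoidHom.mk' (hast a) (hast_add a)

lemma hast_single (a : ℕ) (w : List ℕ) (c : ℚ) :
    hast a (Finsupp.single w c) = c • hastIdx a w :=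
  Finsupp.sum_single_index (by simp)

noncomputable def dualHom : IndexSum →+ IndexSum :=
  AddMonoidHom.mk' dualL (fun x y => Finsupp.mapDomain_add)

lemma dualL_single (w : List ℕ) (c : ℚ) :
    dualL (Finsupp.single w c) = Finsupp.single (dualIdx w) c :=
  Finsupp.mapDomain_single

lemma ohnoL_smul (m : ℕ) (c : ℚ) (x : IndexSum) : ohnoL m (c • x) = (c : ℝ) * ohnoL m x := by
  induction x using Finsupp.induction with
  | zero => simp [ohnoL]
  | single_add k d x _ _ ih =>
      rw [smul_add, ohnoL_add, ohnoL_add, ih, Finsupp.smul_single, ohnoL_single, ohnoL_single,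
        smul_eq_mul]
      push_cast
      ring

lemma shufL_singleton (x : ℕ) (w : List ℕ) :
    shufL [x] w = ∑ j ∈ Finset.range (w.length + 1), Finsupp.single (w.insertIdx j x) 1 := by
  rw [shufL, shuffles_singleton, Finset.sum_eq_multiset_sum, Finset.range_val,
    Multiset.map_map]
  rfl

lemma ohnoL_shufL_singleton (m x : ℕ) (w : List ℕ) :
    ohnoL m (shufL [x] w) = ∑ j ∈ Finset.range (w.length + 1), ohno m (w.insertIdx j x) := by
  rw [shufL_singleton, show ohnoL m = ohnoLhom m from rfl, map_sum]
  refine Finset.sum_congr rfl fun j _ => ?_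
  show ohnoL m _ = _
  rw [ohnoL_single]
  simp

lemma ohnoL_hastIdx (m a : ℕ) (w : List ℕ) :
    ohnoL m (hastIdx a w) = ∑ j ∈ Finset.range w.length, ohno m (w.set j (w.getD j 0 + a)) := by
  rw [hastIdx, show ohnoL m = ohnoLhom m from rfl, map_sum]
  show ∑ i : Fin w.length, ohnoL m _ = _
  rw [← Fin.sum_univ_eq_sum_range (fun j => ohno m (w.set j (w.getD j 0 + a))) w.length]
  refine Finset.sum_congr rfl fun i _ => ?_
  rw [ohnoL_single, List.get_eq_getElem, List.getD_eq_getElem _ _ i.isLt]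
  simp

end Linear
section Reindex

lemma AT3a (g : ℕ → ℕ → ℕ → ℝ) (l : ℕ) :
    ∑ f ∈ Finset.Nat.antidiagonalTuple 3 l, g (f 0) (f 1) (f 2)
      = ∑ i ∈ Finset.range (l + 1), ∑ j ∈ Finset.range (l - i + 1), g j (l - i - j) i := by
  rw [Finset.sum_sigma']
  refine Finset.sum_nbij' (fun f => ⟨f 2, f 0⟩) (fun p => ![p.2, l - p.1 - p.2, p.1])
    ?_ ?_ ?_ ?_ ?_
  · intro f hf
    rw [Finset.Nat.mem_antidiagonalTuple, Fin.sum_univ_three] at hf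
    simp only [Finset.mem_sigma, Finset.mem_range]
    omega
  · intro p hp
    simp only [Finset.mem_sigma, Finset.mem_range] at hp
    rw [Finset.Nat.mem_antidiagonalTuple, Fin.sum_univ_three]
    simp only [Matrix.cons_val_zero, Matrix.cons_val_one, Matrix.head_cons,
      Matrix.cons_val_two, Matrix.tail_cons]
    omega
  · intro f hf
    rw [Finset.Nat.mem_antidiagonalTuple, Fin.sum_univ_three] at hf
    funext i
    fin_cases i <;>
      simp only [Fin.zero_eta, Fin.mk_one, Matrix.cons_val_zero, Matrix.cons_val_one,
        Matrix.head_cons, Fin.isValue, show (⟨2, by omega⟩ : Fin 3) = 2 from rfl,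
        Matrix.cons_val_two, Matrix.tail_cons] <;> omega
  · intro p hp
    simp
  · intro f hf
    rw [Finset.Nat.mem_antidiagonalTuple, Fin.sum_univ_three] at hf
    simp only [Matrix.cons_val_zero, Matrix.cons_val_one, Matrix.head_cons,
      Matrix.cons_val_two, Matrix.tail_cons]
    congr 1
    omega

lemma AT3b (g : ℕ → ℕ → ℕ → ℝ) (l : ℕ) :
    ∑ f ∈ Finset.Nat.antidiagonalTuple 3 l, g (f 0) (f 1) (f 2)
      = ∑ i ∈ Finset.range (l + 1), ∑ p ∈ Finset.range (i + 1), g (l - i) p (i - p) := by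
  rw [Finset.sum_sigma']
  refine Finset.sum_nbij' (fun f => ⟨f 1 + f 2, f 1⟩) (fun p => ![l - p.1, p.2, p.1 - p.2])
    ?_ ?_ ?_ ?_ ?_
  · intro f hf
    rw [Finset.Nat.mem_antidiagonalTuple, Fin.sum_univ_three] at hf
    simp only [Finset.mem_sigma, Finset.mem_range]
    omega
  · intro p hp
    simp only [Finset.mem_sigma, Finset.mem_range] at hp
    rw [Finset.Nat.mem_antidiagonalTuple, Fin.sum_univ_three]
    simp only [Matrix.cons_val_zero, Matrix.cons_val_one, Matrix.head_cons,
      Matrix.cons_val_two, Matrix.tail_cons]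
    omega
  · intro f hf
    rw [Finset.Nat.mem_antidiagonalTuple, Fin.sum_univ_three] at hf
    funext i
    fin_cases i <;>
      simp only [Fin.zero_eta, Fin.mk_one, Matrix.cons_val_zero, Matrix.cons_val_one,
        Matrix.head_cons, Fin.isValue, show (⟨2, by omega⟩ : Fin 3) = 2 from rfl,
        Matrix.cons_val_two, Matrix.tail_cons] <;> omega
  · intro p hp
    simp only [Finset.mem_sigma, Finset.mem_range] at hp
    simp only [Matrix.cons_val_zero, Matrix.cons_val_one, Matrix.head_cons,
      Matrix.cons_val_two, Matrix.tail_cons]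
    obtain ⟨p1, p2⟩ := p
    simp only at hp
    rw [show p2 + (p1 - p2) = p1 by omega]
  · intro f hf
    rw [Finset.Nat.mem_antidiagonalTuple, Fin.sum_univ_three] at hf
    simp only [Matrix.cons_val_zero, Matrix.cons_val_one, Matrix.head_cons,
      Matrix.cons_val_two, Matrix.tail_cons]
    congr 1 <;> omega

end Reindex
section Main
open List

lemma step_shufL (t l : ℕ) : shufL [t] (List.replicate l 2)
    = ∑ i ∈ Finset.range (l + 1),
        Finsupp.single (replicate i 2 ++ t :: replicate (l - i) 2) 1 := by
  rw [shufL_singleton, List.length_replicate]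
  refine Finset.sum_congr rfl fun i hi => ?_
  rw [Finset.mem_range] at hi
  rw [show (replicate l 2 : List ℕ) = replicate l 2 ++ [] by simp,
    insertIdx_rep_le 2 t l i (by omega) []]
  simp

lemma step_dual (t l : ℕ) (ht : 2 ≤ t) :
    dualL (shufL [t] (List.replicate l 2))
      = ∑ i ∈ Finset.range (l + 1),
          Finsupp.single (replicate (l - i) 2 ++ replicate (t - 2) 1 ++ replicate (i + 1) 2) 1 := by
  rw [step_shufL, show dualL = dualHom from rfl, map_sum]
  refine Finset.sum_congr rfl fun i _ => ?_
  show dualL _ = _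
  rw [dualL_single, dual_block i t (l - i) ht]

lemma main1 (m s t l : ℕ) (ht : 2 ≤ t) :
    ohnoL m (shuf (ofIdx [s]) (dualL (shufL [t] (List.replicate l 2))))
      = ∑ i ∈ Finset.range (l + 1), ∑ j ∈ Finset.range ((l - i) + (t - 2) + (i + 1) + 1),
          ohno m ((replicate (l - i) 2 ++ replicate (t - 2) 1
            ++ replicate (i + 1) 2).insertIdx j s) := by
  rw [step_dual t l ht, show shuf (ofIdx [s]) = shufHom (ofIdx [s]) from rfl, map_sum,
    show ohnoL m = ohnoLhom m from rfl, map_sum]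
  refine Finset.sum_congr rfl fun i _ => ?_
  show ohnoL m (shuf (ofIdx [s]) _) = _
  rw [shuf_ofIdx_single, one_smul, ohnoL_shufL_singleton]
  have hlen : (replicate (l - i) 2 ++ replicate (t - 2) 1 ++ replicate (i + 1) 2).length
      = (l - i) + (t - 2) + (i + 1) := by simp; omega
  rw [hlen]

lemma main2 (m s' t l : ℕ) (ht : 2 ≤ t) :
    ohnoL m (hast s' (dualL (shufL [t + 1] (List.replicate l 2))))
      = ∑ i ∈ Finset.range (l + 1), ∑ j ∈ Finset.range ((l - i) + (t - 1) + (i + 1)),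
          ohno m (((replicate (l - i) 2 ++ replicate (t - 1) 1 ++ replicate (i + 1) 2).set j
            ((replicate (l - i) 2 ++ replicate (t - 1) 1
              ++ replicate (i + 1) 2).getD j 0 + s'))) := by
  have h2 : t + 1 - 2 = t - 1 := by omega
  rw [step_dual (t + 1) l (by omega), h2, show hast s' = hastHom s' from rfl, map_sum,
    show ohnoL m = ohnoLhom m from rfl, map_sum]
  refine Finset.sum_congr rfl fun i _ => ?_
  show ohnoL m (hast s' _) = _
  rw [hast_single, one_smul, ohnoL_hastIdx]
  have hlen : (replicate (l - i) 2 ++ replicate (t - 1) 1 ++ replicate (i + 1) 2).length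
      = (l - i) + (t - 1) + (i + 1) := by simp; omega
  rw [hlen]

end Main

section Final

set_option maxHeartbeats 2000000 in
theorem statement18' (s t l m : ℕ) (hs : 3 ≤ s) (ht : 3 ≤ t) (hl : 1 ≤ l) :
    ohnoL m (shuf (ofIdx [s]) (dualL (shufL [t] (List.replicate l 2))))
      - ohnoL m (hast (s - 1) (dualL (shufL [t + 1] (List.replicate l 2))))
    = (∑ f ∈ Finset.Nat.antidiagonalTuple 3 l,
          (ohno m (List.replicate (f 0) 2 ++ [s] ++ List.replicate (f 1) 2 ++
              List.replicate (t - 2) 1 ++ List.replicate (f 2 + 1) 2)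
            + ohno m (List.replicate (f 0) 2 ++ List.replicate (t - 2) 1 ++
                List.replicate (f 1 + 1) 2 ++ [s] ++ List.replicate (f 2) 2)
            - ohno m (List.replicate (f 0) 2 ++ List.replicate (t - 1) 1 ++
                List.replicate (f 1) 2 ++ [s + 1] ++ List.replicate (f 2) 2)))
      - (∑ p ∈ Finset.HasAntidiagonal.antidiagonal l,
          ohno m (List.replicate p.1 2 ++ [s] ++ List.replicate (t - 2) 1 ++
            List.replicate (p.2 + 1) 2))
      - ∑ f ∈ Finset.Nat.antidiagonalTuple 3 (l - 1),
          ohno m (List.replicate (f 0) 2 ++ [s + 1] ++ List.replicate (f 1) 2 ++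
            List.replicate (t - 1) 1 ++ List.replicate (f 2 + 1) 2) := by
  have hL1 : (∑ i ∈ Finset.range (l + 1), ∑ j ∈ Finset.range ((l - i) + (t - 2) + (i + 1) + 1), ohno m ((List.replicate (l - i) 2 ++ List.replicate (t - 2) 1 ++ List.replicate (i + 1) 2).insertIdx j s))
      = (∑ i ∈ Finset.range (l + 1), ∑ j ∈ Finset.range (l - i + 1), ohno m (List.replicate j 2 ++ s :: (List.replicate (l - i - j) 2 ++ (List.replicate (t - 2) 1 ++ List.replicate (i + 1) 2)))) + ((∑ i ∈ Finset.range (l + 1), ∑ j ∈ Finset.range (t - 2), ohno m (List.replicate (l - i) 2 ++ (List.replicate (j + 1) 1 ++ s :: (List.replicate (t - 2 - (j + 1)) 1 ++ List.replicate (i + 1) 2)))) + (∑ i ∈ Finset.range (l + 1), ∑ j ∈ Finset.range (i + 1), ohno m (List.replicate (l - i) 2 ++ (List.replicate (t - 2) 1 ++ (List.replicate (j + 1) 2 ++ s :: List.replicate (i - j) 2))))) := by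
    have hterm : ∀ i ∈ Finset.range (l + 1),
        (∑ j ∈ Finset.range ((l - i) + (t - 2) + (i + 1) + 1),
          ohno m ((List.replicate (l - i) 2 ++ List.replicate (t - 2) 1
            ++ List.replicate (i + 1) 2).insertIdx j s))
        = (∑ j ∈ Finset.range (l - i + 1), ohno m (List.replicate j 2 ++ s :: (List.replicate (l - i - j) 2 ++ (List.replicate (t - 2) 1 ++ List.replicate (i + 1) 2))))
          + ((∑ j ∈ Finset.range (t - 2), ohno m (List.replicate (l - i) 2 ++ (List.replicate (j + 1) 1 ++ s :: (List.replicate (t - 2 - (j + 1)) 1 ++ List.replicate (i + 1) 2))))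
            + (∑ j ∈ Finset.range (i + 1), ohno m (List.replicate (l - i) 2 ++ (List.replicate (t - 2) 1 ++ (List.replicate (j + 1) 2 ++ s :: List.replicate (i - j) 2))))) := by
      intro i hi
      rw [Finset.mem_range] at hi
      rw [show (l - i) + (t - 2) + (i + 1) + 1 = ((l - i) + 1) + ((t - 2) + (i + 1)) by omega,
        Finset.sum_range_add]
      congr 1
      · refine Finset.sum_congr rfl fun j hj => ?_
        rw [Finset.mem_range] at hj
        rw [List.append_assoc, insertIdx_rep_le 2 s (l - i) j (by omega)
          (List.replicate (t - 2) 1 ++ List.replicate (i + 1) 2)]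
      rw [Finset.sum_range_add]
      congr 1
      · refine Finset.sum_congr rfl fun j hj => ?_
        rw [Finset.mem_range] at hj
        rw [List.append_assoc, show l - i + 1 + j = (l - i) + (1 + j) by omega,
          insertIdx_rep_add 2 s (l - i) (1 + j)
            (List.replicate (t - 2) 1 ++ List.replicate (i + 1) 2),
          insertIdx_rep_le 1 s (t - 2) (1 + j) (by omega) (List.replicate (i + 1) 2),
          show 1 + j = j + 1 by omega]
      · refine Finset.sum_congr rfl fun j hj => ?_
        rw [Finset.mem_range] at hj
        rw [List.append_assoc,
          show l - i + 1 + (t - 2 + j) = (l - i) + ((t - 2) + (1 + j)) by omega,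
          insertIdx_rep_add 2 s (l - i) ((t - 2) + (1 + j))
            (List.replicate (t - 2) 1 ++ List.replicate (i + 1) 2),
          insertIdx_rep_add 1 s (t - 2) (1 + j) (List.replicate (i + 1) 2),
          insertIdx_rep_last 2 s (i + 1) (1 + j) (by omega),
          show 1 + j = j + 1 by omega, show i + 1 - (j + 1) = i - j by omega]
    rw [Finset.sum_congr rfl hterm, Finset.sum_add_distrib, Finset.sum_add_distrib]
  have hL2 : (∑ i ∈ Finset.range (l + 1), ∑ j ∈ Finset.range ((l - i) + (t - 1) + (i + 1)), ohno m (((List.replicate (l - i) 2 ++ List.replicate (t - 1) 1 ++ List.replicate (i + 1) 2).set j ((List.replicate (l - i) 2 ++ List.replicate (t - 1) 1 ++ List.replicate (i + 1) 2).getD j 0 + (s - 1)))))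
      = (∑ i ∈ Finset.range l, ∑ j ∈ Finset.range (l - i), ohno m (List.replicate j 2 ++ (s + 1) :: (List.replicate (l - 1 - i - j) 2 ++ (List.replicate (t - 1) 1 ++ List.replicate (i + 1) 2)))) + (((∑ i ∈ Finset.range (l + 1), ohno m (List.replicate (l - i) 2 ++ s :: (List.replicate (t - 2) 1 ++ List.replicate (i + 1) 2))) + (∑ i ∈ Finset.range (l + 1), ∑ j ∈ Finset.range (t - 2), ohno m (List.replicate (l - i) 2 ++ (List.replicate (j + 1) 1 ++ s :: (List.replicate (t - 2 - (j + 1)) 1 ++ List.replicate (i + 1) 2))))) + (∑ i ∈ Finset.range (l + 1), ∑ j ∈ Finset.range (i + 1), ohno m (List.replicate (l - i) 2 ++ (List.replicate (t - 1) 1 ++ (List.replicate j 2 ++ (s + 1) :: List.replicate (i - j) 2))))) := by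
    have hterm : ∀ i ∈ Finset.range (l + 1),
        (∑ j ∈ Finset.range ((l - i) + (t - 1) + (i + 1)),
          ohno m (((List.replicate (l - i) 2 ++ List.replicate (t - 1) 1
            ++ List.replicate (i + 1) 2).set j ((List.replicate (l - i) 2
            ++ List.replicate (t - 1) 1
            ++ List.replicate (i + 1) 2).getD j 0 + (s - 1)))))
        = (∑ j ∈ Finset.range (l - i), ohno m (List.replicate j 2 ++ (s + 1) :: (List.replicate (l - 1 - i - j) 2 ++ (List.replicate (t - 1) 1 ++ List.replicate (i + 1) 2))))
          + (((ohno m (List.replicate (l - i) 2 ++ s :: (List.replicate (t - 2) 1 ++ List.replicate (i + 1) 2))) + (∑ j ∈ Finset.range (t - 2), ohno m (List.replicate (l - i) 2 ++ (List.replicate (j + 1) 1 ++ s :: (List.replicate (t - 2 - (j + 1)) 1 ++ List.replicate (i + 1) 2)))))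
            + (∑ j ∈ Finset.range (i + 1), ohno m (List.replicate (l - i) 2 ++ (List.replicate (t - 1) 1 ++ (List.replicate j 2 ++ (s + 1) :: List.replicate (i - j) 2))))) := by
      intro i hi
      rw [Finset.mem_range] at hi
      rw [show (l - i) + (t - 1) + (i + 1) = (l - i) + ((t - 1) + (i + 1)) by omega,
        Finset.sum_range_add]
      congr 1
      · refine Finset.sum_congr rfl fun j hj => ?_
        rw [Finset.mem_range] at hj
        rw [List.append_assoc, getD_rep_lt 2 (show j < l - i by omega)
            (List.replicate (t - 1) 1 ++ List.replicate (i + 1) 2),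
          show 2 + (s - 1) = s + 1 by omega,
          set_rep_lt 2 (s + 1) (l - i) j (by omega)
            (List.replicate (t - 1) 1 ++ List.replicate (i + 1) 2),
          show l - i - j - 1 = l - 1 - i - j by omega]
      rw [Finset.sum_range_add]
      congr 1
      · have hgen : ∀ j, j < t - 1 →
            ohno m (((List.replicate (l - i) 2 ++ List.replicate (t - 1) 1
              ++ List.replicate (i + 1) 2).set (l - i + j) ((List.replicate (l - i) 2
              ++ List.replicate (t - 1) 1
              ++ List.replicate (i + 1) 2).getD (l - i + j) 0 + (s - 1))))
            = ohno m (List.replicate (l - i) 2 ++ (List.replicate j 1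
                ++ s :: (List.replicate (t - 2 - j) 1 ++ List.replicate (i + 1) 2))) := by
          intro j hj
          rw [List.append_assoc, getD_rep_add 2 (l - i) j
              (List.replicate (t - 1) 1 ++ List.replicate (i + 1) 2),
            getD_rep_lt 1 (show j < t - 1 by omega) (List.replicate (i + 1) 2),
            show 1 + (s - 1) = s by omega,
            set_rep_add 2 s (l - i) j (List.replicate (t - 1) 1 ++ List.replicate (i + 1) 2),
            set_rep_lt 1 s (t - 1) j (by omega) (List.replicate (i + 1) 2),
            show t - 1 - j - 1 = t - 2 - j by omega]
        have hsplit := Finset.sum_range_add (fun j =>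
          ohno m (((List.replicate (l - i) 2 ++ List.replicate (t - 1) 1
            ++ List.replicate (i + 1) 2).set (l - i + j) ((List.replicate (l - i) 2
            ++ List.replicate (t - 1) 1
            ++ List.replicate (i + 1) 2).getD (l - i + j) 0 + (s - 1))))) 1 (t - 2)
        rw [show 1 + (t - 2) = t - 1 by omega] at hsplit
        rw [hsplit, Finset.sum_range_one]
        congr 1
        · rw [hgen 0 (by omega)]
          simp [show t - 2 - 0 = t - 2 from rfl]
        · refine Finset.sum_congr rfl fun j hj => ?_
          rw [Finset.mem_range] at hj
          rw [hgen (1 + j) (by omega), show 1 + j = j + 1 by omega]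
      · refine Finset.sum_congr rfl fun j hj => ?_
        rw [Finset.mem_range] at hj
        rw [List.append_assoc, getD_rep_add 2 (l - i) (t - 1 + j)
            (List.replicate (t - 1) 1 ++ List.replicate (i + 1) 2),
          getD_rep_add 1 (t - 1) j (List.replicate (i + 1) 2),
          getD_rep_last 2 (show j < i + 1 by omega),
          show 2 + (s - 1) = s + 1 by omega,
          set_rep_add 2 (s + 1) (l - i) (t - 1 + j)
            (List.replicate (t - 1) 1 ++ List.replicate (i + 1) 2),
          set_rep_add 1 (s + 1) (t - 1) j (List.replicate (i + 1) 2),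
          set_rep_last 2 (s + 1) (i + 1) j (by omega),
          show i + 1 - j - 1 = i - j by omega]
    rw [Finset.sum_congr rfl hterm, Finset.sum_add_distrib, Finset.sum_add_distrib,
      Finset.sum_add_distrib]
    congr 1
    rw [Finset.sum_range_succ]
    simp
  have hA : (∑ f ∈ Finset.Nat.antidiagonalTuple 3 l,
        ohno m (List.replicate (f 0) 2 ++ [s] ++ List.replicate (f 1) 2 ++
          List.replicate (t - 2) 1 ++ List.replicate (f 2 + 1) 2)) = ∑ i ∈ Finset.range (l + 1), ∑ j ∈ Finset.range (l - i + 1), ohno m (List.replicate j 2 ++ s :: (List.replicate (l - i - j) 2 ++ (List.replicate (t - 2) 1 ++ List.replicate (i + 1) 2))) := by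
    refine (AT3a (fun a b c => ohno m (List.replicate a 2 ++ [s] ++ List.replicate b 2 ++
      List.replicate (t - 2) 1 ++ List.replicate (c + 1) 2)) l).trans ?_
    refine Finset.sum_congr rfl fun i _ => Finset.sum_congr rfl fun j _ => ?_
    simp [List.append_assoc]
  have hB : (∑ f ∈ Finset.Nat.antidiagonalTuple 3 l,
        ohno m (List.replicate (f 0) 2 ++ List.replicate (t - 2) 1 ++
          List.replicate (f 1 + 1) 2 ++ [s] ++ List.replicate (f 2) 2)) = ∑ i ∈ Finset.range (l + 1), ∑ j ∈ Finset.range (i + 1), ohno m (List.replicate (l - i) 2 ++ (List.replicate (t - 2) 1 ++ (List.replicate (j + 1) 2 ++ s :: List.replicate (i - j) 2))) := by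
    refine (AT3b (fun a b c => ohno m (List.replicate a 2 ++ List.replicate (t - 2) 1 ++
      List.replicate (b + 1) 2 ++ [s] ++ List.replicate c 2)) l).trans ?_
    refine Finset.sum_congr rfl fun i _ => Finset.sum_congr rfl fun j _ => ?_
    simp [List.append_assoc]
  have hC : (∑ f ∈ Finset.Nat.antidiagonalTuple 3 l,
        ohno m (List.replicate (f 0) 2 ++ List.replicate (t - 1) 1 ++
          List.replicate (f 1) 2 ++ [s + 1] ++ List.replicate (f 2) 2)) = ∑ i ∈ Finset.range (l + 1), ∑ j ∈ Finset.range (i + 1), ohno m (List.replicate (l - i) 2 ++ (List.replicate (t - 1) 1 ++ (List.replicate j 2 ++ (s + 1) :: List.replicate (i - j) 2))) := by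
    refine (AT3b (fun a b c => ohno m (List.replicate a 2 ++ List.replicate (t - 1) 1 ++
      List.replicate b 2 ++ [s + 1] ++ List.replicate c 2)) l).trans ?_
    refine Finset.sum_congr rfl fun i _ => Finset.sum_congr rfl fun j _ => ?_
    simp [List.append_assoc]
  have hE : (∑ f ∈ Finset.Nat.antidiagonalTuple 3 (l - 1),
        ohno m (List.replicate (f 0) 2 ++ [s + 1] ++ List.replicate (f 1) 2 ++
          List.replicate (t - 1) 1 ++ List.replicate (f 2 + 1) 2)) = ∑ i ∈ Finset.range l, ∑ j ∈ Finset.range (l - i), ohno m (List.replicate j 2 ++ (s + 1) :: (List.replicate (l - 1 - i - j) 2 ++ (List.replicate (t - 1) 1 ++ List.replicate (i + 1) 2))) := by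
    refine (AT3a (fun a b c => ohno m (List.replicate a 2 ++ [s + 1] ++ List.replicate b 2 ++
      List.replicate (t - 1) 1 ++ List.replicate (c + 1) 2)) (l - 1)).trans ?_
    rw [show l - 1 + 1 = l by omega]
    refine Finset.sum_congr rfl fun i hi => ?_
    rw [Finset.mem_range] at hi
    rw [show l - 1 - i + 1 = l - i by omega]
    refine Finset.sum_congr rfl fun j hj => ?_
    simp [List.append_assoc]
  have hD : (∑ p ∈ Finset.HasAntidiagonal.antidiagonal l,
        ohno m (List.replicate p.1 2 ++ [s] ++ List.replicate (t - 2) 1 ++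
          List.replicate (p.2 + 1) 2)) = ∑ i ∈ Finset.range (l + 1), ohno m (List.replicate (l - i) 2 ++ s :: (List.replicate (t - 2) 1 ++ List.replicate (i + 1) 2)) := by
    rw [Finset.Nat.sum_antidiagonal_eq_sum_range_succ_mk, ← Finset.sum_range_reflect]
    refine Finset.sum_congr rfl fun i hi => ?_
    rw [Finset.mem_range] at hi
    simp only
    rw [show l + 1 - 1 - i = l - i by omega, show l - (l - i) = i by omega]
    simp [List.append_assoc]
  rw [main1 m s t l (by omega), main2 m (s - 1) t l (by omega), hL1, hL2,
    Finset.sum_sub_distrib, Finset.sum_add_distrib, hA, hB, hC, hD, hE]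
  ring

end Final

/-- For integers `s, t ≥ 3`, `l ≥ 1`, and `m ≥ 0`,
`O_m((s) ⧢ ((t) ⧢ ({2}^l))†) − O_m((s−1) ⊛ ((t+1) ⧢ ({2}^l))†)
  = Σ_{a+b+c=l} ( O_m({2}^a, s, {2}^b, {1}^{t−2}, {2}^{c+1})
      + O_m({2}^a, {1}^{t−2}, {2}^{b+1}, s, {2}^c) − O_m({2}^a, {1}^{t−1}, {2}^b, s+1, {2}^c) )
    − Σ_{a+b=l} O_m({2}^a, s, {1}^{t−2}, {2}^{b+1})
    − Σ_{a+b+c=l−1} O_m({2}^a, s+1, {2}^b, {1}^{t−1}, {2}^{c+1})`. -/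
theorem statement18 (s t l m : ℕ) (hs : 3 ≤ s) (ht : 3 ≤ t) (hl : 1 ≤ l) :
    ohnoL m (shuf (ofIdx [s]) (dualL (shufL [t] (List.replicate l 2))))
      - ohnoL m (hast (s - 1) (dualL (shufL [t + 1] (List.replicate l 2))))
    = (∑ f ∈ Finset.Nat.antidiagonalTuple 3 l,
          (ohno m (List.replicate (f 0) 2 ++ [s] ++ List.replicate (f 1) 2 ++
              List.replicate (t - 2) 1 ++ List.replicate (f 2 + 1) 2)
            + ohno m (List.replicate (f 0) 2 ++ List.replicate (t - 2) 1 ++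
                List.replicate (f 1 + 1) 2 ++ [s] ++ List.replicate (f 2) 2)
            - ohno m (List.replicate (f 0) 2 ++ List.replicate (t - 1) 1 ++
                List.replicate (f 1) 2 ++ [s + 1] ++ List.replicate (f 2) 2)))
      - (∑ p ∈ Finset.HasAntidiagonal.antidiagonal l,
          ohno m (List.replicate p.1 2 ++ [s] ++ List.replicate (t - 2) 1 ++
            List.replicate (p.2 + 1) 2))
      - ∑ f ∈ Finset.Nat.antidiagonalTuple 3 (l - 1),
          ohno m (List.replicate (f 0) 2 ++ [s + 1] ++ List.replicate (f 1) 2 ++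
            List.replicate (t - 1) 1 ++ List.replicate (f 2 + 1) 2) := by
  exact statement18' s t l m hs ht hl
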